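/- Let N > n ≥ 1, k ≥ 1, let f₁,…,f_N : ℂⁿ → ℂ be analytic, and for each t = 1,…,N let B_t be a list of exactly k analytic functions ℂⁿ → ℂ. Let z = (z₁,…,z_k) ∈ R_{\vec B} (so each k×k matrix V_{B_t}(z) is invertible) and define p_t(z,x) := Σ_{j=1}^k f_t(z_j) L_{B_t,j}(z,x). Suppose there exists an open neighborhood U ⊆ (ℂⁿ)^k of z such that for all z̃ = (z̃₁,…,z̃_k) ∈ U, all z' ∈ U, and all i = 1,…,k: Σ_{t=1}^N |p_t(z, z̃_i)|² ≤ Σ_{t=1}^N |p_t(z', z̃_i)|². Then for all i = 1,…,k and j = 1,…,n: Σ_{t=1}^N ( ∂(f_t − p_t(z,·))/∂x_j evaluated at z_i ) · conj(f_t(z_i)) = 0; equivalently, J_z(z_i)* f(z_i) = 0 for each i, where J_z(x) is the N×n Jacobian matrix of (f₁ − p₁(z,·),…,f_N − p_N(z,·)) at x and f(z_i) = (f₁(z_i),…,f_N(z_i)); in particular z is a fixed point of the simplified Gauss-Newton iteration z_i ↦ z_i − J_z(z_i)† f(z_i) whenever rank J_z(z_i) = n for all i. -/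

import Mathlib

open Matrix

noncomputable section

/-- The (square) generalized Vandermonde matrix `V_B(z)` with `(i,j)` entry `b_j(z_i)`. -/
def vandB {n k : ℕ} (B : Fin k → (Fin n → ℂ) → ℂ) (z : Fin k → Fin n → ℂ) :
    Matrix (Fin k) (Fin k) ℂ :=
  Matrix.of fun i j => B j (z i)

/-- The generalized Lagrange function `L_{B,i}(z,x) = Σ_t (V_B(z)⁻¹)_{t,i} b_t(x)` in the
square case `|B| = k`. -/
def lagB {n k : ℕ} (B : Fin k → (Fin n → ℂ) → ℂ) (z : Fin k → Fin n → ℂ) (i : Fin k)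
    (x : Fin n → ℂ) : ℂ :=
  ∑ t : Fin k, (vandB B z)⁻¹ t i * B t x

/-- `p(z,·) := Σ_i f(z_i) L_{B,i}(z,·)`. -/
def pB {n k : ℕ} (B : Fin k → (Fin n → ℂ) → ℂ) (f : (Fin n → ℂ) → ℂ)
    (z : Fin k → Fin n → ℂ) (x : Fin n → ℂ) : ℂ :=
  ∑ i : Fin k, f (z i) * lagB B z i x

/-- The partial derivative `∂g/∂x_j` of `g : ℂⁿ → ℂ` at `a`. -/
def pderiv' {n : ℕ} (j : Fin n) (g : (Fin n → ℂ) → ℂ) (a : Fin n → ℂ) : ℂ :=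
  deriv (fun w => g (Function.update a j w)) (a j)

/-- The Jacobian matrix `J_z(x)` of `(f₁ − p₁(z,·), …, f_N − p_N(z,·))` at `x`. -/
def Jz {N n k : ℕ} (f : Fin N → (Fin n → ℂ) → ℂ) (B : Fin N → Fin k → (Fin n → ℂ) → ℂ)
    (z : Fin k → Fin n → ℂ) (x : Fin n → ℂ) : Matrix (Fin N) (Fin n) ℂ :=
  Matrix.of fun t j => pderiv' j (fun y => f t y - pB (B t) (f t) z y) x

lemma interpAux {n k : ℕ} (B : Fin k → (Fin n → ℂ) → ℂ) (f : (Fin n → ℂ) → ℂ)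
    (y : Fin k → Fin n → ℂ) (hy : IsUnit (vandB B y).det) (i : Fin k) :
    pB B f y (y i) = f (y i) := by
  have h1 : vandB B y * (vandB B y)⁻¹ = 1 := Matrix.mul_nonsing_inv _ hy
  unfold pB lagB
  have h2 : ∀ s : Fin k, (∑ t, (vandB B y)⁻¹ t s * B t (y i))
      = (vandB B y * (vandB B y)⁻¹) i s := by
    intro s
    rw [Matrix.mul_apply]
    exact Finset.sum_congr rfl fun t _ => by rw [mul_comm]; rfl
  simp only [h2, h1, Matrix.one_apply]
  simp

lemma pB_diffAt {n k : ℕ} (B : Fin k → (Fin n → ℂ) → ℂ)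
    (hB : ∀ s, AnalyticOnNhd ℂ (B s) Set.univ) (f : (Fin n → ℂ) → ℂ)
    (z : Fin k → Fin n → ℂ) (x : Fin n → ℂ) :
    DifferentiableAt ℂ (pB B f z) x := by
  unfold pB lagB
  apply DifferentiableAt.fun_sum
  intro i _
  apply DifferentiableAt.const_mul
  apply DifferentiableAt.fun_sum
  intro s _
  exact ((hB s x trivial).differentiableAt).const_mul _

lemma hasFDerivAt_normSq_comp {F : ℂ → ℂ} {d c w₀ : ℂ} (h : HasDerivAt F d w₀)
    (hc : F w₀ = c) :
    HasFDerivAt (fun w => Complex.normSq (F w))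
      (Complex.reCLM.comp ((2 * ((starRingEnd ℂ) c * d)) • (ContinuousLinearMap.id ℝ ℂ)))
      w₀ := by
  have hD : HasFDerivAt F ((ContinuousLinearMap.smulRight (1 : ℂ →L[ℂ] ℂ) d).restrictScalars ℝ)
      w₀ := h.hasFDerivAt.restrictScalars ℝ
  have hre : HasFDerivAt (fun w => (F w).re)
      (Complex.reCLM.comp ((ContinuousLinearMap.smulRight (1 : ℂ →L[ℂ] ℂ) d).restrictScalars ℝ))
      w₀ := Complex.reCLM.hasFDerivAt.comp w₀ hD
  have him : HasFDerivAt (fun w => (F w).im)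
      (Complex.imCLM.comp ((ContinuousLinearMap.smulRight (1 : ℂ →L[ℂ] ℂ) d).restrictScalars ℝ))
      w₀ := Complex.imCLM.hasFDerivAt.comp w₀ hD
  have total := (hre.mul hre).add (him.mul him)
  have heq : (fun w => Complex.normSq (F w))
      = fun w => (F w).re * (F w).re + (F w).im * (F w).im := by
    funext w; rw [Complex.normSq_apply]
  rw [heq]
  refine total.congr_fderiv ?_
  ext v
  simp [hc, Complex.mul_re, Complex.mul_im]
  ring

/-- if the perturbation is locally pointwise minimal at `z ∈ R_{B⃗}`, then
`Σ_t (∂(f_t − p_t(z,·))/∂x_j)(z_i) · conj(f_t(z_i)) = 0` for all `i`, `j`, i.e.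
`J_z(z_i)* f(z_i) = 0`; in particular `z` is a fixed point of the simplified Gauss-Newton
iteration `z_i ↦ z_i − J_z(z_i)† f(z_i)` whenever `rank J_z(z_i) = n` for all `i`. -/
theorem stmt18 {N n k : ℕ} (hn : 1 ≤ n) (hN : n < N) (hk : 1 ≤ k)
    (f : Fin N → (Fin n → ℂ) → ℂ) (hf : ∀ t, AnalyticOnNhd ℂ (f t) Set.univ)
    (B : Fin N → Fin k → (Fin n → ℂ) → ℂ) (hBa : ∀ t s, AnalyticOnNhd ℂ (B t s) Set.univ)
    (z : Fin k → Fin n → ℂ) (hz : ∀ t, IsUnit (vandB (B t) z).det)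
    (U : Set (Fin k → Fin n → ℂ)) (hU : IsOpen U) (hzU : z ∈ U)
    (hmin : ∀ zt ∈ U, ∀ z' ∈ U, ∀ i : Fin k,
      (∑ t, ‖pB (B t) (f t) z (zt i)‖ ^ 2) ≤ ∑ t, ‖pB (B t) (f t) z' (zt i)‖ ^ 2) :
    (∀ (i : Fin k) (j : Fin n),
      (∑ t, pderiv' j (fun y => f t y - pB (B t) (f t) z y) (z i)
          * (starRingEnd ℂ) (f t (z i))) = 0) ∧
    ((∀ i : Fin k, (Jz f B z (z i)).rank = n) →
      ∀ i : Fin k,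
        z i - (((Jz f B z (z i))ᴴ * Jz f B z (z i))⁻¹ * (Jz f B z (z i))ᴴ) *ᵥ
            (fun t => f t (z i)) = z i) := by
  have part1 : ∀ (i : Fin k) (j : Fin n),
      (∑ t, pderiv' j (fun y => f t y - pB (B t) (f t) z y) (z i)
          * (starRingEnd ℂ) (f t (z i))) = 0 := by
    intro i j
    set a : Fin n → ℂ := z i with ha
    set w₀ : ℂ := a j with hw₀
    have hu0 : Function.update a j w₀ = a := Function.update_eq_self j a
    have hudiff : HasDerivAt (fun w => Function.update a j w) (Pi.single j 1) w₀ :=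
      hasDerivAt_update a j w₀
    -- complex derivatives of the composed maps
    have hFd : ∀ t, DifferentiableAt ℂ (fun w => f t (Function.update a j w)) w₀ := fun t =>
      ((hf t (Function.update a j w₀) trivial).differentiableAt).comp w₀
        hudiff.differentiableAt
    have hPd : ∀ t, DifferentiableAt ℂ
        (fun w => pB (B t) (f t) z (Function.update a j w)) w₀ := fun t =>
      (pB_diffAt (B t) (hBa t) (f t) z _).comp w₀ hudiff.differentiableAt
    set d : Fin N → ℂ := fun t => deriv (fun w => f t (Function.update a j w)) w₀ with hd
    set e : Fin N → ℂ := fun t => deriv (fun w => pB (B t) (f t) z (Function.update a j w)) w₀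
      with he
    have hFt : ∀ t, HasDerivAt (fun w => f t (Function.update a j w)) (d t) w₀ := fun t =>
      (hFd t).hasDerivAt
    have hPt : ∀ t, HasDerivAt (fun w => pB (B t) (f t) z (Function.update a j w)) (e t) w₀ :=
      fun t => (hPd t).hasDerivAt
    set c : Fin N → ℂ := fun t => f t (z i) with hc
    have hcF : ∀ t, f t (Function.update a j w₀) = c t := fun t => by rw [hu0]
    have hcP : ∀ t, pB (B t) (f t) z (Function.update a j w₀) = c t := fun t => by
      rw [hu0, ha]
      exact interpAux (B t) (f t) z (hz t) i
    -- the local-minimum function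
    set h : ℂ → ℝ := fun w => ∑ t, (Complex.normSq (f t (Function.update a j w))
        - Complex.normSq (pB (B t) (f t) z (Function.update a j w))) with hh
    have hHF : HasFDerivAt h
        (∑ t, ((Complex.reCLM.comp ((2 * ((starRingEnd ℂ) (c t) * d t)) •
            (ContinuousLinearMap.id ℝ ℂ))) -
          (Complex.reCLM.comp ((2 * ((starRingEnd ℂ) (c t) * e t)) •
            (ContinuousLinearMap.id ℝ ℂ))))) w₀ :=
      HasFDerivAt.fun_sum fun t _ =>
        (hasFDerivAt_normSq_comp (hFt t) (hcF t)).fun_sub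
          (hasFDerivAt_normSq_comp (hPt t) (hcP t))
    -- local minimality
    -- the open set where everything is nice
    set V : Set (Fin k → Fin n → ℂ) :=
      U ∩ ⋂ t : Fin N, {y | (vandB (B t) y).det ≠ 0} with hV
    have hdetcont : ∀ t : Fin N, Continuous fun y : Fin k → Fin n → ℂ =>
        (vandB (B t) y).det := by
      intro t
      apply Continuous.matrix_det
      apply continuous_matrix
      intro i' j'
      have hBc : Continuous (B t j') := by
        rw [continuous_iff_continuousAt]
        exact fun x => (hBa t j' x trivial).continuousAt
      exact hBc.comp (continuous_apply i')
    have hVopen : IsOpen V := by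
      apply hU.inter
      apply isOpen_iInter_of_finite
      intro t
      exact isOpen_compl_singleton.preimage (hdetcont t)
    have hzV : z ∈ V := by
      refine ⟨hzU, Set.mem_iInter.2 fun t => ?_⟩
      exact (hz t).ne_zero
    set m : ℂ → (Fin k → Fin n → ℂ) := fun w => Function.update z i (Function.update a j w)
      with hm
    have hmcont : Continuous m :=
      Continuous.update continuous_const i (Continuous.update continuous_const j continuous_id)
    have hmw₀ : m w₀ = z := by
      show Function.update z i (Function.update a j w₀) = z; rw [hu0, ha, Function.update_eq_self]
    have hS : m ⁻¹' V ∈ nhds w₀ := by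
      apply hmcont.continuousAt.preimage_mem_nhds
      rw [hmw₀]
      exact hVopen.mem_nhds hzV
    have hnorm2 : ∀ x : ℂ, ‖x‖ ^ 2 = Complex.normSq x := by
      intro x
      rw [Complex.sq_norm]
    have hmem : ∀ᶠ w in nhds w₀, 0 ≤ h w := by
      filter_upwards [hS] with w hw
      obtain ⟨hwU, hwdet⟩ := hw
      have hwdet' : ∀ t, IsUnit (vandB (B t) (m w)).det := by
        intro t
        exact isUnit_iff_ne_zero.2 (Set.mem_iInter.1 hwdet t)
      have hle := hmin (m w) hwU (m w) hwU i
      have hmi : m w i = Function.update a j w := by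
        rw [hm]; simp
      have hPf : ∀ t, pB (B t) (f t) (m w) (m w i) = f t (m w i) := fun t =>
        interpAux (B t) (f t) (m w) (hwdet' t) i
      show 0 ≤ ∑ t, (Complex.normSq (f t (Function.update a j w))
        - Complex.normSq (pB (B t) (f t) z (Function.update a j w)))
      rw [Finset.sum_sub_distrib, sub_nonneg]
      calc ∑ t, Complex.normSq (pB (B t) (f t) z (Function.update a j w))
          = ∑ t, ‖pB (B t) (f t) z (m w i)‖ ^ 2 := by
            refine Finset.sum_congr rfl fun t _ => ?_
            rw [hmi, hnorm2]
        _ ≤ ∑ t, ‖pB (B t) (f t) (m w) (m w i)‖ ^ 2 := hle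
        _ = ∑ t, Complex.normSq (f t (Function.update a j w)) := by
            refine Finset.sum_congr rfl fun t _ => ?_
            rw [hPf t, hmi, hnorm2]
    have hloc : IsLocalMin h w₀ := by
      have h0 : h w₀ = 0 := by
        rw [hh]
        refine Finset.sum_eq_zero fun t _ => ?_
        rw [hcP t, hcF t, sub_self]
      filter_upwards [hmem] with w hw
      rw [h0]
      exact hw
    have hL0 := hloc.hasFDerivAt_eq_zero hHF
    -- evaluate the zero derivative at conj A
    set A : ℂ := ∑ t, (d t - e t) * (starRingEnd ℂ) (c t) with hA
    have hap := DFunLike.congr_fun hL0 ((starRingEnd ℂ) A)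
    simp only [ContinuousLinearMap.coe_sum', Finset.sum_apply,
      ContinuousLinearMap.sub_apply, ContinuousLinearMap.coe_comp', Function.comp_apply,
      ContinuousLinearMap.smul_apply, ContinuousLinearMap.coe_id', id_eq, smul_eq_mul,
      Complex.reCLM_apply, ContinuousLinearMap.zero_apply] at hap
    have key : ∑ t, ((2 * ((starRingEnd ℂ) (c t) * d t) * (starRingEnd ℂ) A).re
        - (2 * ((starRingEnd ℂ) (c t) * e t) * (starRingEnd ℂ) A).re)
        = 2 * Complex.normSq A := by
      have e1 : ∑ t, ((2 * ((starRingEnd ℂ) (c t) * d t) * (starRingEnd ℂ) A).re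
          - (2 * ((starRingEnd ℂ) (c t) * e t) * (starRingEnd ℂ) A).re)
          = (∑ t, (2 * ((starRingEnd ℂ) (c t) * d t) * (starRingEnd ℂ) A
            - 2 * ((starRingEnd ℂ) (c t) * e t) * (starRingEnd ℂ) A)).re := by
        rw [Complex.re_sum]
        exact Finset.sum_congr rfl fun t _ => (Complex.sub_re _ _).symm
      have e2 : (∑ t, (2 * ((starRingEnd ℂ) (c t) * d t) * (starRingEnd ℂ) A
          - 2 * ((starRingEnd ℂ) (c t) * e t) * (starRingEnd ℂ) A))
          = 2 * (A * (starRingEnd ℂ) A) := by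
        rw [hA, Finset.sum_mul, Finset.mul_sum]
        exact Finset.sum_congr rfl fun t _ => by ring
      rw [e1, e2, Complex.mul_conj]
      simp
    rw [key] at hap
    have hA0 : A = 0 := by
      have : Complex.normSq A = 0 := by linarith
      exact Complex.normSq_eq_zero.1 this
    -- identify the goal sum with A
    rw [← hA0, hA]
    refine Finset.sum_congr rfl fun t _ => ?_
    congr 1
    have := ((hFt t).fun_sub (hPt t)).deriv
    simpa [pderiv'] using this
  refine ⟨part1, ?_⟩
  intro _ i
  have h0 : (Jz f B z (z i))ᴴ *ᵥ (fun t => f t (z i)) = 0 := by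
    funext j
    have hp := part1 i j
    show ∑ t, (starRingEnd ℂ) (Jz f B z (z i) t j) * f t (z i) = 0
    have : ∑ t, (starRingEnd ℂ) (Jz f B z (z i) t j) * f t (z i)
        = (starRingEnd ℂ) (∑ t, Jz f B z (z i) t j * (starRingEnd ℂ) (f t (z i))) := by
      rw [map_sum]
      exact Finset.sum_congr rfl fun t _ => by
        rw [map_mul (starRingEnd ℂ), Complex.conj_conj]
    rw [this]
    have : (∑ t, Jz f B z (z i) t j * (starRingEnd ℂ) (f t (z i))) = 0 := hp
    rw [this, map_zero]
  rw [← Matrix.mulVec_mulVec, h0, Matrix.mulVec_zero, sub_zero]
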